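/- arXiv:2411.19011 — 6 statements merged into one kernel-verified Lean document; each statement's English description precedes it below -/
import Mathlib

section
/- Let k be a field of characteristic ≠ 2, let u = 1 + a_1 x + a_2 x^2 + ⋯ ∈ k⟦x⟧ satisfy u^2 = 1 + x, and for N ≥ 2 set b_{1,N} = x + a_1 x^2 + ⋯ + a_{N−1} x^N + y and b_{2,N} = x + a_1 x^2 + ⋯ + a_{N−1} x^N − y in k[x,y]. Then δ_N := b_{1,N} b_{2,N} − (x^2 + x^3 − y^2) lies in the ideal (x, y)^{N+1} of k[x,y]. -/
open MvPolynomial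

/-- With `u = 1 + a₁x + a₂x² + ⋯ ∈ k⟦x⟧` a square root of `1 + x` (char k ≠ 2) and, for
`N ≥ 2`, `b_{1,N} = x + a₁x² + ⋯ + a_{N−1}x^N + y`, `b_{2,N} = x + a₁x² + ⋯ + a_{N−1}x^N − y`,
the element `δ_N = b_{1,N}·b_{2,N} − (x² + x³ − y²)` lies in `(x,y)^{N+1} ⊆ k[x,y]`. -/
theorem perturbation_in_power_of_max_ideal (k : Type*) [Field k] (h2 : ringChar k ≠ 2)
    (u : PowerSeries k) (hu0 : PowerSeries.constantCoeff u = 1)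
    (hu : u ^ 2 = 1 + PowerSeries.X) (N : ℕ) (hN : 2 ≤ N) :
    ((∑ i ∈ Finset.range N, C (PowerSeries.coeff i u) * (X 0) ^ (i + 1)) + X 1) *
      ((∑ i ∈ Finset.range N, C (PowerSeries.coeff i u) * (X 0) ^ (i + 1)) - X 1) -
      ((X 0) ^ 2 + (X 0) ^ 3 - (X 1) ^ 2)
      ∈ (Ideal.span {X 0, X 1} : Ideal (MvPolynomial (Fin 2) k)) ^ (N + 1) := by
  set T : Polynomial k := PowerSeries.trunc N u with hT
  set A : MvPolynomial (Fin 2) k := Polynomial.aeval (X 0 : MvPolynomial (Fin 2) k) T with hA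
  -- the truncated sum equals X0 * A
  have hS : (∑ i ∈ Finset.range N, C (PowerSeries.coeff i u) * (X 0) ^ (i + 1))
      = X 0 * A := by
    rw [hA, hT, PowerSeries.trunc_apply, map_sum, Finset.mul_sum]
    rw [show Finset.Ico 0 N = Finset.range N by simp]
    apply Finset.sum_congr rfl
    intro i _
    rw [Polynomial.aeval_monomial]
    simp [algebraMap_eq]
    ring
  -- coefficients of T^2 - 1 - X vanish below N
  have hcoeff : ∀ d, d < N →
      Polynomial.coeff (T ^ 2 - 1 - Polynomial.X) d = 0 := by
    intro d hd
    have h1 : Polynomial.coeff (T ^ 2) d = PowerSeries.coeff d (u ^ 2) := by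
      rw [sq, sq, Polynomial.coeff_mul, PowerSeries.coeff_mul]
      apply Finset.sum_congr rfl
      intro p hp
      rw [Finset.HasAntidiagonal.mem_antidiagonal] at hp
      rw [hT, PowerSeries.coeff_trunc, PowerSeries.coeff_trunc,
        if_pos (by omega), if_pos (by omega)]
    rw [Polynomial.coeff_sub, Polynomial.coeff_sub, h1, hu]
    rw [map_add, PowerSeries.coeff_one, PowerSeries.coeff_X,
      Polynomial.coeff_one, Polynomial.coeff_X]
    rcases d with _ | _ | d <;> simp
  have hdvd : (Polynomial.X : Polynomial k) ^ N ∣ (T ^ 2 - 1 - Polynomial.X) := by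
    rw [Polynomial.X_pow_dvd_iff]
    exact hcoeff
  obtain ⟨q, hq⟩ := hdvd
  -- rewrite the element
  have key : ((∑ i ∈ Finset.range N, C (PowerSeries.coeff i u) * (X 0) ^ (i + 1)) + X 1) *
      ((∑ i ∈ Finset.range N, C (PowerSeries.coeff i u) * (X 0) ^ (i + 1)) - X 1) -
      ((X 0) ^ 2 + (X 0) ^ 3 - (X 1) ^ 2)
      = (X 0) ^ (N + 1) *
        ((X 0) * Polynomial.aeval (X 0 : MvPolynomial (Fin 2) k) q) := by
    rw [hS]
    have h2 : (X 0 : MvPolynomial (Fin 2) k) ^ 2 * (A ^ 2 - 1 - X 0)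
        = (X 0) ^ (N + 1) * ((X 0) * Polynomial.aeval (X 0 : MvPolynomial (Fin 2) k) q) := by
      have : A ^ 2 - 1 - X 0
          = Polynomial.aeval (X 0 : MvPolynomial (Fin 2) k) (T ^ 2 - 1 - Polynomial.X) := by
        simp [hA]
      rw [this, hq]
      simp only [map_mul, map_pow, Polynomial.aeval_X]
      ring
    calc (X 0 * A + X 1) * (X 0 * A - X 1) - ((X 0) ^ 2 + (X 0) ^ 3 - (X 1) ^ 2)
        = (X 0 : MvPolynomial (Fin 2) k) ^ 2 * (A ^ 2 - 1 - X 0) := by ring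
      _ = _ := h2
  rw [key]
  have hX0 : (X 0 : MvPolynomial (Fin 2) k) ∈ Ideal.span {X 0, X 1} :=
    Ideal.subset_span (by simp)
  exact Ideal.mul_mem_right _ _ (Ideal.pow_mem_pow hX0 (N + 1))
end

section
/- Let R = k⟦x,y⟧ over a field k, and let I = (xy). Then the element x + y is a non-zerodivisor on R/I, the ideal I + (x + y) = (x + y, x^2) is an irreducible ideal of R, but I itself is not a primary ideal. -/
open MvPowerSeries

namespace DeformAux

variable {k : Type*} [Field k]

noncomputable def E (a b : ℕ) : Fin 2 →₀ ℕ := Finsupp.single 0 a + Finsupp.single 1 b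

@[simp] lemma E_apply0 (a b : ℕ) : (E a b) 0 = a := by
  simp [E, Finsupp.single_apply]

@[simp] lemma E_apply1 (a b : ℕ) : (E a b) 1 = b := by
  simp [E, Finsupp.single_apply]

lemma eq_E (e : Fin 2 →₀ ℕ) : e = E (e 0) (e 1) := by
  ext s
  fin_cases s <;> simp

lemma E_le_iff {a b c d : ℕ} : E a b ≤ E c d ↔ a ≤ c ∧ b ≤ d := by
  simp [Finsupp.le_def, Fin.forall_fin_two]

lemma E_add (a b c d : ℕ) : E a b + E c d = E (a + c) (b + d) := by
  ext s
  fin_cases s <;> simp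

lemma E_sub (a b c d : ℕ) : E a b - E c d = E (a - c) (b - d) := by
  ext s
  fin_cases s <;> simp [Finsupp.tsub_apply]

lemma E_eq_iff {a b c d : ℕ} : E a b = E c d ↔ a = c ∧ b = d := by
  constructor
  · intro h
    exact ⟨by rw [← E_apply0 a b, h, E_apply0], by rw [← E_apply1 a b, h, E_apply1]⟩
  · rintro ⟨rfl, rfl⟩; rfl

@[simp] lemma E_zero : E 0 0 = 0 := by
  ext s; fin_cases s <;> simp

lemma single0 (a : ℕ) : Finsupp.single (0 : Fin 2) a = E a 0 := by
  simp [E]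

lemma single1 (b : ℕ) : Finsupp.single (1 : Fin 2) b = E 0 b := by
  simp [E]

lemma X0_eq : (X 0 : MvPowerSeries (Fin 2) k) = monomial (E 1 0) 1 := by
  rw [X_def, single0]

lemma X1_eq : (X 1 : MvPowerSeries (Fin 2) k) = monomial (E 0 1) 1 := by
  rw [X_def, single1]

lemma XY_eq : (X 0 * X 1 : MvPowerSeries (Fin 2) k) = monomial (E 1 1) 1 := by
  rw [X_def, X_def, monomial_mul_monomial, one_mul, single0, single1, E_add]

lemma X0sq_eq : (X 0 ^ 2 : MvPowerSeries (Fin 2) k) = monomial (E 2 0) 1 := by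
  rw [X_pow_eq, single0]

lemma X1sq_eq : (X 1 ^ 2 : MvPowerSeries (Fin 2) k) = monomial (E 0 2) 1 := by
  rw [X_pow_eq, single1]

lemma X1pow_eq (n : ℕ) : (X 1 ^ n : MvPowerSeries (Fin 2) k) = monomial (E 0 n) 1 := by
  rw [X_pow_eq, single1]

/-- Coefficient of a product `monomial (E a b) 1 * f` at `E c d`. -/
lemma coeff_E_monomial_mul (a b c d : ℕ) (f : MvPowerSeries (Fin 2) k) :
    coeff (E c d) (monomial (E a b) 1 * f) =
      if a ≤ c ∧ b ≤ d then coeff (E (c - a) (d - b)) f else 0 := by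
  rw [coeff_monomial_mul]
  by_cases h : a ≤ c ∧ b ≤ d
  · rw [if_pos (E_le_iff.mpr h), if_pos h, one_mul, E_sub]
  · rw [if_neg (fun hh => h (E_le_iff.mp hh)), if_neg h]

lemma coeff_E_mul_monomial (a b c d : ℕ) (f : MvPowerSeries (Fin 2) k) :
    coeff (E c d) (f * monomial (E a b) 1) =
      if a ≤ c ∧ b ≤ d then coeff (E (c - a) (d - b)) f else 0 := by
  rw [coeff_mul_monomial]
  by_cases h : a ≤ c ∧ b ≤ d
  · rw [if_pos (E_le_iff.mpr h), if_pos h, mul_one, E_sub]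
  · rw [if_neg (fun hh => h (E_le_iff.mp hh)), if_neg h]

/-- Elements of `(xy)` have vanishing coefficients on the axes. -/
lemma coeff_of_mem_span_XY {f : MvPowerSeries (Fin 2) k}
    (hf : f ∈ Ideal.span {(X 0 * X 1 : MvPowerSeries (Fin 2) k)}) (c d : ℕ)
    (h : c = 0 ∨ d = 0) : coeff (E c d) f = 0 := by
  rw [Ideal.mem_span_singleton] at hf
  obtain ⟨g, rfl⟩ := hf
  rw [XY_eq, coeff_E_monomial_mul, if_neg (by omega)]

/-- `X 0 ∉ (x + y, x²)`. -/
lemma X0_not_mem : (X 0 : MvPowerSeries (Fin 2) k) ∉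
    Ideal.span {(X 0 + X 1 : MvPowerSeries (Fin 2) k), X 0 ^ 2} := by
  intro h
  rw [Ideal.mem_span_pair] at h
  obtain ⟨u, v, huv⟩ := h
  have h10 := congrArg (coeff (E 1 0)) huv
  have h01 := congrArg (coeff (E 0 1)) huv
  rw [map_add, mul_add, map_add, X0sq_eq, X0_eq, X1_eq, coeff_E_mul_monomial,
    coeff_E_mul_monomial, coeff_E_mul_monomial, coeff_monomial_same] at h10
  rw [map_add, mul_add, map_add, X0sq_eq, X0_eq, X1_eq, coeff_E_mul_monomial,
    coeff_E_mul_monomial, coeff_E_mul_monomial, coeff_monomial] at h01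
  rw [if_pos (by omega), if_neg (by omega), if_neg (by omega)] at h10
  rw [if_neg (by omega), if_pos (by omega), if_neg (by omega),
    if_neg (by rw [E_eq_iff]; omega)] at h01
  simp only [add_zero, zero_add] at h10 h01
  rw [h10] at h01
  exact one_ne_zero h01

/-- Power series vanishing in degrees ≤ 1 lie in `(x², xy, y²)`. -/
lemma mem_m2 (g : MvPowerSeries (Fin 2) k) (h00 : coeff (E 0 0) g = 0)
    (h10 : coeff (E 1 0) g = 0) (h01 : coeff (E 0 1) g = 0) :
    g ∈ Ideal.span {(X 0 ^ 2 : MvPowerSeries (Fin 2) k), X 0 * X 1, X 1 ^ 2} := by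
  classical
  let A : MvPowerSeries (Fin 2) k := fun e => coeff (e + E 2 0) g
  let B : MvPowerSeries (Fin 2) k := fun e => if e 0 = 0 then coeff (e + E 1 1) g else 0
  let Cc : MvPowerSeries (Fin 2) k := fun e => if e 0 = 0 then coeff (e + E 0 2) g else 0
  have hg : g = X 0 ^ 2 * A + X 0 * X 1 * B + X 1 ^ 2 * Cc := by
    ext e
    obtain ⟨a, b, rfl⟩ : ∃ a b, e = E a b := ⟨e 0, e 1, eq_E e⟩
    rw [map_add, map_add, X0sq_eq, XY_eq, X1sq_eq, coeff_E_monomial_mul,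
      coeff_E_monomial_mul, coeff_E_monomial_mul]
    have hA : ∀ c d : ℕ, coeff (E c d) A = coeff (E (c + 2) d) g := by
      intro c d
      show A (E c d) = _
      simp [A, E_add]
    have hB : ∀ c d : ℕ, coeff (E c d) B =
        if c = 0 then coeff (E (c + 1) (d + 1)) g else 0 := by
      intro c d
      show B (E c d) = _
      simp [B, E_add]
    have hC : ∀ c d : ℕ, coeff (E c d) Cc =
        if c = 0 then coeff (E c (d + 2)) g else 0 := by
      intro c d
      show Cc (E c d) = _
      simp [Cc, E_add]
    rw [hA, hB, hC]
    rcases Nat.lt_or_ge a 2 with ha | ha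
    · interval_cases a
      · rcases Nat.lt_or_ge b 2 with hb | hb
        · interval_cases b
          · simpa using h00
          · simpa using h01
        · have hb' : b - 2 + 2 = b := by omega
          simp [hb, hb']
      · rcases Nat.eq_zero_or_pos b with rfl | hb
        · simpa using h10
        · have hb' : b - 1 + 1 = b := by omega
          have hb1 : 1 ≤ b := hb
          simp [hb1, hb']
    · have ha' : a - 2 + 2 = a := by omega
      have ha1 : ¬ a - 1 = 0 := by omega
      have ha0 : ¬ a = 0 := by omega
      have h1a : 1 ≤ a := by omega
      simp [ha, ha', ha1, ha0, h1a]
  rw [hg]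
  refine Ideal.add_mem _ (Ideal.add_mem _ ?_ ?_) ?_
  · exact Ideal.mul_mem_right _ _ (Ideal.subset_span (by simp))
  · exact Ideal.mul_mem_right _ _ (Ideal.subset_span (by simp))
  · exact Ideal.mul_mem_right _ _ (Ideal.subset_span (by simp))


lemma span_eq :
    (Ideal.span {(X 0 * X 1 : MvPowerSeries (Fin 2) k)} ⊔ Ideal.span {X 0 + X 1})
      = Ideal.span {X 0 + X 1, X 0 ^ 2} := by
  rw [← Ideal.span_union, Set.singleton_union]
  apply le_antisymm
  · rw [Ideal.span_le]
    rintro z hz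
    simp only [Set.mem_insert_iff, Set.mem_singleton_iff] at hz
    rcases hz with rfl | rfl
    · exact SetLike.mem_coe.mpr (Ideal.mem_span_pair.mpr ⟨X 0, -1, by ring⟩)
    · exact Ideal.subset_span (Set.mem_insert _ _)
  · rw [Ideal.span_le]
    rintro z hz
    simp only [Set.mem_insert_iff, Set.mem_singleton_iff] at hz
    rcases hz with rfl | rfl
    · exact Ideal.subset_span (Set.mem_insert_iff.mpr (Or.inr rfl))
    · exact SetLike.mem_coe.mpr (Ideal.mem_span_pair.mpr ⟨-1, X 0, by ring⟩)

lemma decomp (f : MvPowerSeries (Fin 2) k) :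
    ∃ d : k, f - C (constantCoeff f) - d • X 0
      ∈ Ideal.span {(X 0 + X 1 : MvPowerSeries (Fin 2) k), X 0 ^ 2} := by
  classical
  refine ⟨coeff (E 1 0) f - coeff (E 0 1) f, ?_⟩
  have hm2 : Ideal.span {(X 0 ^ 2 : MvPowerSeries (Fin 2) k), X 0 * X 1, X 1 ^ 2}
      ≤ Ideal.span {X 0 + X 1, X 0 ^ 2} := by
    rw [Ideal.span_le]
    rintro z hz
    simp only [Set.mem_insert_iff, Set.mem_singleton_iff] at hz
    rcases hz with rfl | rfl | rfl
    · exact Ideal.subset_span (Set.mem_insert_iff.mpr (Or.inr rfl))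
    · exact SetLike.mem_coe.mpr (Ideal.mem_span_pair.mpr ⟨X 0, -1, by ring⟩)
    · exact SetLike.mem_coe.mpr (Ideal.mem_span_pair.mpr ⟨X 1 - X 0, 1, by ring⟩)
  set a := coeff (E 1 0) f with ha
  set b := coeff (E 0 1) f with hb
  set c := constantCoeff f with hc
  have hE10 : (E 1 0 : Fin 2 →₀ ℕ) ≠ 0 := by
    rw [← E_zero, Ne, E_eq_iff]; omega
  have hE01 : (E 0 1 : Fin 2 →₀ ℕ) ≠ 0 := by
    rw [← E_zero, Ne, E_eq_iff]; omega
  have hE1001 : (E 1 0 : Fin 2 →₀ ℕ) ≠ E 0 1 := by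
    rw [Ne, E_eq_iff]; omega
  have hE0110 : (E 0 1 : Fin 2 →₀ ℕ) ≠ E 1 0 := by
    rw [Ne, E_eq_iff]; omega
  have hg : f - C c - a • X 0 - b • X 1
      ∈ Ideal.span {(X 0 ^ 2 : MvPowerSeries (Fin 2) k), X 0 * X 1, X 1 ^ 2} := by
    have e1 : coeff (0 : Fin 2 →₀ ℕ) f = c := by
      rw [coeff_zero_eq_constantCoeff_apply]
    have m1 : constantCoeff (monomial (E 1 0) (1 : k)) = 0 := by
      rw [← coeff_zero_eq_constantCoeff_apply, coeff_monomial, if_neg hE10.symm]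
    have m2 : constantCoeff (monomial (E 0 1) (1 : k)) = 0 := by
      rw [← coeff_zero_eq_constantCoeff_apply, coeff_monomial, if_neg hE01.symm]
    apply mem_m2
    · simp [smul_eq_C_mul, X0_eq, X1_eq, coeff_monomial, coeff_C, hE10.symm, hE01.symm, e1,
        m1, m2, hc]
    · simp [smul_eq_C_mul, X0_eq, X1_eq, coeff_monomial, coeff_C, hE10, hE1001, hE0110, ha]
    · simp [smul_eq_C_mul, X0_eq, X1_eq, coeff_monomial, coeff_C, hE01, hE1001, hE0110, hb]
  have key : f - C c - (a - b) • X 0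
      = (f - C c - a • X 0 - b • X 1) + C b * (X 0 + X 1) := by
    rw [smul_eq_C_mul, smul_eq_C_mul, smul_eq_C_mul, map_sub]
    ring
  rw [key]
  exact Ideal.add_mem _ (hm2 hg)
    (Ideal.mul_mem_left _ _ (Ideal.subset_span (Set.mem_insert _ _)))

lemma nzd (r : MvPowerSeries (Fin 2) k)
    (h : (X 0 + X 1) * r ∈ Ideal.span {(X 0 * X 1 : MvPowerSeries (Fin 2) k)}) :
    r ∈ Ideal.span {(X 0 * X 1 : MvPowerSeries (Fin 2) k)} := by
  classical
  rw [Ideal.mem_span_singleton] at h ⊢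
  obtain ⟨f, hf⟩ := h
  have hb0 : ∀ a : ℕ, coeff (E a 0) r = 0 := by
    intro a
    have h2 := congrArg (coeff (E (a + 1) 0)) hf
    rw [add_mul, map_add, XY_eq, X0_eq, X1_eq, coeff_E_monomial_mul, coeff_E_monomial_mul,
      coeff_E_monomial_mul, if_pos (by omega), if_neg (by omega), if_neg (by omega)] at h2
    simpa using h2
  have hb1 : ∀ b : ℕ, coeff (E 0 b) r = 0 := by
    intro b
    have h2 := congrArg (coeff (E 0 (b + 1))) hf
    rw [add_mul, map_add, XY_eq, X0_eq, X1_eq, coeff_E_monomial_mul, coeff_E_monomial_mul,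
      coeff_E_monomial_mul, if_neg (by omega), if_pos (by omega), if_neg (by omega)] at h2
    simpa using h2
  refine ⟨(fun e => coeff (e + E 1 1) r : MvPowerSeries (Fin 2) k), ?_⟩
  ext e
  obtain ⟨a, b, rfl⟩ : ∃ a b, e = E a b := ⟨e 0, e 1, eq_E e⟩
  rw [XY_eq, coeff_E_monomial_mul (f := (fun e => coeff (e + E 1 1) r : MvPowerSeries (Fin 2) k))]
  have hg : ∀ c d : ℕ,
      coeff (E c d) ((fun e => coeff (e + E 1 1) r) : MvPowerSeries (Fin 2) k)
        = coeff (E (c + 1) (d + 1)) r := by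
    intro c d
    show coeff (E c d + E 1 1) r = _
    rw [E_add]
  by_cases hab : 1 ≤ a ∧ 1 ≤ b
  · rw [if_pos hab, hg, show a - 1 + 1 = a by omega, show b - 1 + 1 = b by omega]
  · rw [if_neg hab]
    by_cases hA : a = 0
    · subst hA; exact hb1 b
    · have hB : b = 0 := by omega
      subst hB; exact hb0 a

lemma not_primary :
    ¬ (Ideal.span {(X 0 * X 1 : MvPowerSeries (Fin 2) k)}).IsPrimary := by
  intro h
  rcases Ideal.isPrimary_iff.mp h with ⟨-, h2⟩
  rcases h2 (Ideal.subset_span rfl) with hx | hy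
  · have h3 := coeff_of_mem_span_XY hx 1 0 (Or.inr rfl)
    rw [X0_eq, coeff_monomial_same] at h3
    exact one_ne_zero h3
  · rw [Ideal.mem_radical_iff] at hy
    obtain ⟨n, hn⟩ := hy
    have h3 := coeff_of_mem_span_XY hn 0 n (Or.inl rfl)
    rw [X1pow_eq, coeff_monomial_same] at h3
    exact one_ne_zero h3

lemma irred (J K : Ideal (MvPowerSeries (Fin 2) k))
    (hJK : J ⊓ K = Ideal.span {X 0 * X 1} ⊔ Ideal.span {X 0 + X 1}) :
    J = Ideal.span {X 0 * X 1} ⊔ Ideal.span {X 0 + X 1} ∨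
    K = Ideal.span {X 0 * X 1} ⊔ Ideal.span {X 0 + X 1} := by
  by_contra hcon
  push_neg at hcon
  obtain ⟨hJ, hK⟩ := hcon
  have key : ∀ L : Ideal (MvPowerSeries (Fin 2) k),
      (Ideal.span {X 0 * X 1} ⊔ Ideal.span {X 0 + X 1}) ≤ L →
      L ≠ Ideal.span {X 0 * X 1} ⊔ Ideal.span {X 0 + X 1} → X 0 ∈ L := by
    intro L hQL hLQ
    obtain ⟨f, hfL, hfQ⟩ : ∃ f, f ∈ L ∧
        f ∉ (Ideal.span {X 0 * X 1} ⊔ Ideal.span {X 0 + X 1} :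
          Ideal (MvPowerSeries (Fin 2) k)) := by
      by_contra hcc
      push_neg at hcc
      exact hLQ (le_antisymm hcc hQL)
    obtain ⟨d, hd⟩ := decomp f
    rw [← span_eq] at hd
    by_cases hc : constantCoeff f = 0
    · by_cases hdz : d = 0
      · exfalso
        apply hfQ
        have : f - C (constantCoeff f) - d • X 0 = f := by
          rw [hc, hdz, map_zero, zero_smul, sub_zero, sub_zero]
        rwa [this] at hd
      · have hfq : f - (f - C (constantCoeff f) - d • X 0)
            = d • X 0 := by
          rw [hc, map_zero, sub_zero]
          abel
        have hmem : f - (f - C (constantCoeff f) - d • X 0) ∈ L :=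
          Submodule.sub_mem _ hfL (hQL hd)
        rw [hfq, smul_eq_C_mul] at hmem
        have h5 := Ideal.mul_mem_left L (C d⁻¹) hmem
        rwa [← mul_assoc, ← map_mul, inv_mul_cancel₀ hdz, map_one, one_mul] at h5
    · have hu : IsUnit f := isUnit_iff_constantCoeff.mpr (isUnit_iff_ne_zero.mpr hc)
      have hL : L = ⊤ := Ideal.eq_top_of_isUnit_mem _ hfL hu
      rw [hL]
      exact Submodule.mem_top
  have hXJ : X 0 ∈ J := key J (by rw [← hJK]; exact inf_le_left) hJ
  have hXK : X 0 ∈ K := key K (by rw [← hJK]; exact inf_le_right) hK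
  have hXQ : (X 0 : MvPowerSeries (Fin 2) k)
      ∈ Ideal.span {X 0 * X 1} ⊔ Ideal.span {X 0 + X 1} := by
    rw [← hJK]
    exact Ideal.mem_inf.mpr ⟨hXJ, hXK⟩
  rw [span_eq] at hXQ
  exact X0_not_mem hXQ

end DeformAux

open DeformAux in
/-- In `R = k⟦x,y⟧` with `I = (xy)`: the element `x + y` is a non-zerodivisor on `R/I`,
the ideal `I + (x + y) = (x + y, x²)` is an irreducible ideal of `R`, but `I` itself is
not primary. -/
theorem deformation_of_irreducible_ideal_fails (k : Type*) [Field k] :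
    (∀ r : MvPowerSeries (Fin 2) k,
        (X 0 + X 1) * r ∈ (Ideal.span {X 0 * X 1} : Ideal (MvPowerSeries (Fin 2) k)) →
        r ∈ (Ideal.span {X 0 * X 1} : Ideal (MvPowerSeries (Fin 2) k))) ∧
    (Ideal.span {X 0 * X 1} ⊔ Ideal.span {X 0 + X 1}
        = (Ideal.span {X 0 + X 1, X 0 ^ 2} : Ideal (MvPowerSeries (Fin 2) k))) ∧
    (∀ J K : Ideal (MvPowerSeries (Fin 2) k),
        J ⊓ K = Ideal.span {X 0 * X 1} ⊔ Ideal.span {X 0 + X 1} →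
        J = Ideal.span {X 0 * X 1} ⊔ Ideal.span {X 0 + X 1} ∨
        K = Ideal.span {X 0 * X 1} ⊔ Ideal.span {X 0 + X 1}) ∧
    ¬ (Ideal.span {X 0 * X 1} : Ideal (MvPowerSeries (Fin 2) k)).IsPrimary := by
  exact ⟨nzd, span_eq, irred, not_primary⟩
end

section
/- Let (R, m) be a noetherian local ring and let a ∈ m be a non-zerodivisor. If R/(a) is reduced, then R is reduced. -/
/-- If `(R, m)` is a noetherian local ring and `a ∈ m` is a non-zerodivisor such that
`R/(a)` is reduced, then `R` is reduced. -/
theorem isReduced_of_quotient_isReduced {R : Type*} [CommRing R] [IsNoetherianRing R]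
    [IsLocalRing R] (a : R) (ha : a ∈ IsLocalRing.maximalIdeal R)
    (hreg : a ∈ nonZeroDivisors R)
    (hred : IsReduced (R ⧸ Ideal.span {a})) : IsReduced R := by
  have hN : nilradical R = ⊥ := by
    apply Submodule.eq_bot_of_le_smul_of_le_jacobson_bot (IsLocalRing.maximalIdeal R)
    · exact IsNoetherian.noetherian _
    · intro x hx
      obtain ⟨n, hn⟩ := hx
      -- image of x in R/(a) is nilpotent hence zero, so x ∈ (a)
      have hxq : (Ideal.Quotient.mk (Ideal.span {a}) x) = 0 := by
        apply IsNilpotent.eq_zero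
        exact ⟨n, by rw [← map_pow, hn, map_zero]⟩
      have hxa : x ∈ Ideal.span {a} := Ideal.Quotient.eq_zero_iff_mem.mp hxq
      obtain ⟨y, hy⟩ := Ideal.mem_span_singleton'.mp hxa
      have hyN : y ∈ nilradical R := by
        refine ⟨n, ?_⟩
        have : a ^ n * y ^ n = 0 := by
          rw [← mul_pow]
          rw [mul_comm] at hy
          rw [hy, hn]
        exact (pow_mem hreg n).2 _ (by rwa [mul_comm] at this)
      rw [← hy, mul_comm]
      exact Submodule.smul_mem_smul ha hyN
    · rw [IsLocalRing.jacobson_eq_maximalIdeal ⊥ bot_ne_top]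
  constructor
  intro x hx
  have : x ∈ nilradical R := hx
  rw [hN] at this
  exact this
end

section
/- Let (R, m) be a noetherian local ring and let a ∈ m be a non-zerodivisor of R. Then there exists an integer N ≥ 1 such that for every δ ∈ m^N, the element a + δ is also a non-zerodivisor of R. -/
/-- Perturbation of regular elements: if `(R, m)` is a noetherian local ring and `a ∈ m`
is a non-zerodivisor, then there is `N ≥ 1` such that `a + δ` is a non-zerodivisor for
every `δ ∈ m^N`. -/
theorem nonZeroDivisor_stable_under_perturbation {R : Type*} [CommRing R]
    [IsNoetherianRing R] [IsLocalRing R] (a : R)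
    (ha : a ∈ IsLocalRing.maximalIdeal R) (hreg : a ∈ nonZeroDivisors R) :
    ∃ N : ℕ, 1 ≤ N ∧
      ∀ δ ∈ (IsLocalRing.maximalIdeal R) ^ N, a + δ ∈ nonZeroDivisors R := by
  set m := IsLocalRing.maximalIdeal R with hm
  -- Artin–Rees for the ideal (a)
  obtain ⟨k, hk⟩ := Ideal.exists_pow_inf_eq_pow_smul m (M := R) (Ideal.span {a})
  refine ⟨k + 1, Nat.le_add_left 1 k, ?_⟩
  intro δ hδ
  rw [mem_nonZeroDivisors_iff_right]
  intro x hx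
  -- show x ∈ m^j for all j by induction
  have key : ∀ j : ℕ, x ∈ m ^ j := by
    intro j
    induction j with
    | zero => simp
    | succ j ih =>
      have hax : a * x ∈ m ^ (k + 1 + j) • ⊤ ⊓ Ideal.span {a} := by
        constructor
        · have heq : a * x = -(δ * x) := by linear_combination hx
          rw [heq]
          have : δ * x ∈ m ^ (k + 1 + j) := by
            rw [pow_add]
            exact Ideal.mul_mem_mul hδ ih
          simpa using neg_mem this
        · exact Ideal.mem_span_singleton'.mpr ⟨x, by ring⟩
      rw [hk (k + 1 + j) (by omega)] at hax
      have hsub : m ^ (k + 1 + j - k) • (m ^ k • ⊤ ⊓ Ideal.span {a}) ≤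
          m ^ (j + 1) • Ideal.span {a} := by
        have : (k + 1 + j - k) = j + 1 := by omega
        rw [this]
        exact Submodule.smul_mono le_rfl inf_le_right
      have := hsub hax
      rw [smul_eq_mul, Ideal.mem_mul_span_singleton] at this
      obtain ⟨y, hy, hya⟩ := this
      have hxy : x - y = 0 := (mem_nonZeroDivisors_iff_right.mp hreg) _ (by linear_combination -hya)
      have : x = y := by linear_combination hxy
      rwa [this]
  have hbot := Ideal.iInf_pow_eq_bot_of_isLocalRing m (Ideal.IsMaximal.ne_top inferInstance)
  have : x ∈ (⨅ i : ℕ, m ^ i) := Submodule.mem_iInf _ |>.mpr key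
  rw [hbot] at this
  simpa using this
end

section
/- Let R be a noetherian integral domain with fraction field Q(R), let n ≥ 1, and let F = x₁t₁ + ⋯ + xₙtₙ ∈ R[t₁,…,tₙ] where x₁,…,xₙ ∈ R are not all zero. If the ideal (F) of R[t₁,…,tₙ] is prime, then grade((x₁,…,xₙ), R) ≥ 2, i.e., the ideal (x₁,…,xₙ) of R contains a regular sequence of length 2. -/
open MvPolynomial

/-- Key lemma: if `(F)` is prime with `F = ∑ xᵢ tᵢ`, then for every nonzero `r`,
`((r) : (x)) = (r)`. -/
lemma star_lemma {R : Type*} [CommRing R] [IsDomain R] {n : ℕ} {x : Fin n → R}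
    (hx : x ≠ 0)
    (hF : (Ideal.span {∑ i, C (x i) * X i} : Ideal (MvPolynomial (Fin n) R)).IsPrime)
    {r : R} (hr : r ≠ 0) {t : R} (h : ∀ i, x i * t ∈ Ideal.span {r}) :
    t ∈ Ideal.span {r} := by
  set F : MvPolynomial (Fin n) R := ∑ i, C (x i) * X i with hFdef
  obtain ⟨j, hj⟩ := Function.ne_iff.mp hx
  have hcF : constantCoeff F = 0 := by
    simp [hFdef, map_sum]
  have hF0 : F ≠ 0 := by
    intro h0
    apply hj
    have := congrArg (coeff (Finsupp.single j 1)) h0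
    simp only [hFdef, coeff_sum, coeff_C_mul, coeff_X', coeff_zero] at this
    rw [Finset.sum_eq_single j] at this
    · simpa using this
    · intro i _ hij
      simp [Finsupp.single_left_inj one_ne_zero, hij]
    · simp
  choose y hy using fun i => (Ideal.mem_span_singleton.mp (h i))
  set G : MvPolynomial (Fin n) R := ∑ i, C (y i) * X i with hGdef
  have h1 : C t * F = C r * G := by
    rw [hFdef, hGdef, Finset.mul_sum, Finset.mul_sum]
    refine Finset.sum_congr rfl fun i _ => ?_
    rw [← mul_assoc, ← mul_assoc, ← C_mul, ← C_mul, mul_comm t (x i), hy i]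
  have h2 : C r * G ∈ Ideal.span {F} := by
    rw [← h1]
    exact Ideal.mem_span_singleton.mpr ⟨C t, mul_comm _ _⟩
  rcases hF.mem_or_mem h2 with hc | hc
  · exfalso
    obtain ⟨d, hd⟩ := Ideal.mem_span_singleton.mp hc
    have := congrArg constantCoeff hd
    rw [map_mul, hcF, zero_mul, constantCoeff_C] at this
    exact hr this
  · obtain ⟨d, hd⟩ := Ideal.mem_span_singleton.mp hc
    have h3 : F * (C t - C r * d) = 0 := by
      rw [mul_sub, mul_comm F (C t), h1, hd]; ring
    rcases mul_eq_zero.mp h3 with h4 | h4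
    · exact absurd h4 hF0
    · have h5 : C t = C r * d := sub_eq_zero.mp h4
      have := congrArg constantCoeff h5
      rw [constantCoeff_C, map_mul, constantCoeff_C] at this
      exact Ideal.mem_span_singleton.mpr ⟨constantCoeff d, this⟩

/-- Let `R` be a noetherian domain, `n ≥ 1`, and `F = x₁t₁ + ⋯ + xₙtₙ ∈ R[t₁,…,tₙ]`
with `x₁,…,xₙ ∈ R` not all zero. If `(F)` is a prime ideal of `R[t₁,…,tₙ]`, then
`grade((x₁,…,xₙ), R) ≥ 2`: the ideal `(x₁,…,xₙ)` contains a regular sequence of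
length 2. -/
theorem grade_ge_two_of_linear_hypersurface_prime {R : Type*} [CommRing R] [IsDomain R]
    [IsNoetherianRing R] (n : ℕ) (hn : 1 ≤ n) (x : Fin n → R) (hx : x ≠ 0)
    (hF : (Ideal.span {∑ i, C (x i) * X i} : Ideal (MvPolynomial (Fin n) R)).IsPrime) :
    ∃ r s : R, r ∈ Ideal.span (Set.range x) ∧ s ∈ Ideal.span (Set.range x) ∧
      r ∈ nonZeroDivisors R ∧
      ∀ t : R, s * t ∈ Ideal.span {r} → t ∈ Ideal.span {r} := by
  classical
  obtain ⟨j, hj⟩ := Function.ne_iff.mp hx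
  set I : Ideal R := Ideal.span (Set.range x) with hI
  set J : Ideal R := Ideal.span {x j} with hJ
  have key : ∀ t : R, (∀ i, x i * t ∈ J) → t ∈ J :=
    fun t h => star_lemma hx hF hj h
  have main : ∃ s ∈ I, ∀ t : R, s * t ∈ J → t ∈ J := by
    by_contra hcon
    push_neg at hcon
    obtain ⟨s, hsinf, hsprim, _, hsmin⟩ : ∃ s : Finset (Ideal R), s.inf id = J ∧
        (∀ ⦃Q⦄, Q ∈ s → Ideal.IsPrimary Q) ∧ True ∧ ∀ ⦃Q⦄, Q ∈ s → ¬ (s.erase Q).inf id ≤ Q := by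
      obtain ⟨t, h1, h2, -, h4⟩ := Submodule.IsLasker.exists_isMinimalPrimaryDecomposition
        (Submodule.isLasker R R) J
      exact ⟨t, h1, h2, trivial, h4⟩
    have hJle : ∀ Q ∈ s, J ≤ Q := fun Q hQ => hsinf ▸ Finset.inf_le hQ
    have hsub : (I : Set R) ⊆ ⋃ Q ∈ (s : Set (Ideal R)), ((Ideal.radical Q : Ideal R) : Set R) := by
      intro a ha
      obtain ⟨t, hst, htJ⟩ := hcon a ha
      have : ∃ Q ∈ s, t ∉ Q := by
        by_contra hQ
        push_neg at hQ
        refine htJ ?_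
        rw [← hsinf]
        exact Submodule.mem_finsetInf.mpr fun Q hQ' => hQ Q hQ'
      obtain ⟨Q, hQs, htQ⟩ := this
      have htaQ : t * a ∈ Q := by
        have := hJle Q hQs hst
        rwa [mul_comm] at this
      rcases (Ideal.isPrimary_iff.mp (hsprim hQs)).2 htaQ with h' | h'
      · exact absurd h' htQ
      · exact Set.mem_biUnion hQs h'
    obtain ⟨Q, hQs, hIQ⟩ :=
      (Ideal.subset_union_prime ⊥ ⊥ fun Q hQ _ _ => Ideal.isPrime_radical (hsprim hQ)).mp hsub
    obtain ⟨w, hw1, hw2⟩ := SetLike.not_le_iff_exists.mp (hsmin hQs)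
    obtain ⟨k0, hk0⟩ := Ideal.exists_radical_pow_le_of_fg Q (IsNoetherian.noetherian _)
    have hex : ∃ k, Q.radical ^ k * Ideal.span {w} ≤ Q :=
      ⟨k0, le_trans Ideal.mul_le_left hk0⟩
    set k := Nat.find hex with hkdef
    have hk : Q.radical ^ k * Ideal.span {w} ≤ Q := Nat.find_spec hex
    have hkpos : k ≠ 0 := by
      intro h0
      apply hw2
      rw [h0, pow_zero, one_mul] at hk
      exact hk (Ideal.mem_span_singleton_self w)
    have hlt : ¬ Q.radical ^ (k - 1) * Ideal.span {w} ≤ Q :=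
      Nat.find_min hex (Nat.sub_lt (Nat.pos_of_ne_zero hkpos) one_pos)
    obtain ⟨v, hv1, hv2⟩ := SetLike.not_le_iff_exists.mp hlt
    have hPv : Q.radical * Ideal.span {v} ≤ Q := by
      refine le_trans ?_ hk
      have h1 : Ideal.span {v} ≤ Q.radical ^ (k - 1) * Ideal.span {w} :=
        (Ideal.span_singleton_le_iff_mem _).mpr hv1
      calc Q.radical * Ideal.span {v}
          ≤ Q.radical * (Q.radical ^ (k - 1) * Ideal.span {w}) := Ideal.mul_mono_right h1
        _ = Q.radical ^ k * Ideal.span {w} := by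
            rw [← mul_assoc, ← pow_succ', Nat.sub_add_cancel (Nat.one_le_iff_ne_zero.mpr hkpos)]
    have hvother : ∀ Q' ∈ s, Q' ≠ Q → v ∈ Q' := by
      intro Q' hQ' hne
      have hwQ' : w ∈ Q' := by
        have := Submodule.mem_finsetInf.mp hw1 Q' (Finset.mem_erase.mpr ⟨hne, hQ'⟩)
        exact this
      have hsp : Ideal.span {w} ≤ Q' := (Ideal.span_singleton_le_iff_mem _).mpr hwQ'
      exact hsp (Ideal.mul_le_right hv1)
    have hIv : ∀ i, x i * v ∈ J := by
      intro i
      have hxi : x i ∈ Q.radical := hIQ (Ideal.subset_span ⟨i, rfl⟩)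
      rw [← hsinf]
      refine Submodule.mem_finsetInf.mpr fun Q' hQ' => ?_
      by_cases hne : Q' = Q
      · subst hne
        exact hPv (Ideal.mul_mem_mul hxi (Ideal.mem_span_singleton_self v))
      · exact Ideal.mul_mem_left Q' (x i) (hvother Q' hQ' hne)
    exact hv2 (hJle Q hQs (key v hIv))
  obtain ⟨s, hs1, hs2⟩ := main
  exact ⟨x j, s, Ideal.subset_span ⟨j, rfl⟩, hs1, mem_nonZeroDivisors_of_ne_zero hj, hs2⟩
end

section
/- Let k be a field of characteristic 0 and R = k[x,y] localized at the maximal ideal (x,y). Then R/(x² + x³ − y²) is an integral domain, but for every N ≥ 1 there exists δ ∈ (x,y)^N · R such that R/(x² + x³ − y² + δ) is not an integral domain. -/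
section AuxPolynomial
open Polynomial

/-- truncated power series square root of 1 + X -/
lemma sqrt_trunc (k : Type*) [Field k] [CharZero k] (N : ℕ) :
    ∃ s : k[X], s.coeff 0 = 1 ∧ X ^ (N + 1) ∣ s ^ 2 - (1 + X) := by
  induction N with
  | zero =>
    exact ⟨1, by simp, by rw [show (1:k[X])^2 - (1+X) = X * (-1) by ring]; exact ⟨-1, by ring⟩⟩
  | succ N ih =>
    obtain ⟨s, hs0, t, ht⟩ := ih
    refine ⟨s - C (t.coeff 0 / 2) * X ^ (N + 1), ?_, ?_⟩
    · simp [coeff_X_pow, hs0]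
    · have h1 : (s - C (t.coeff 0 / 2) * X ^ (N + 1)) ^ 2 - (1 + X)
          = X ^ (N+1) * (t - 2 * C (t.coeff 0 / 2) * s) + (C (t.coeff 0 / 2))^2 * X^(2*N+2) := by
        linear_combination ht
      rw [h1]
      apply dvd_add
      · rw [pow_succ]
        exact mul_dvd_mul dvd_rfl (X_dvd_iff.mpr (by simp [hs0]; ring))
      · exact Dvd.dvd.mul_left (pow_dvd_pow X (by omega)) _


variable {k : Type*} [Field k]

lemma c_natDegree : (X ^ 2 + X ^ 3 : k[X]).natDegree = 3 := by compute_degree!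

lemma c_ne_zero : (X ^ 2 + X ^ 3 : k[X]) ≠ 0 := by
  intro h
  have := c_natDegree (k := k)
  rw [h] at this
  simp at this

lemma quad_natDegree : (X ^ 2 - C (X ^ 2 + X ^ 3 : k[X]) : (k[X])[X]).natDegree = 2 := by
  compute_degree!

lemma quad_irreducible :
    Irreducible (X ^ 2 - C (X ^ 2 + X ^ 3 : k[X]) : (k[X])[X]) := by
  set c : k[X] := X ^ 2 + X ^ 3 with hc
  constructor
  · intro hu
    have := natDegree_eq_zero_of_isUnit hu
    rw [quad_natDegree] at this
    simp at this
  · intro f g hfg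
    by_contra hng
    push_neg at hng
    obtain ⟨hf, hg⟩ := hng
    have hq0 : (X ^ 2 - C c : (k[X])[X]) ≠ 0 := by
      intro h
      have := quad_natDegree (k := k)
      rw [h] at this
      simp at this
    have hf0 : f ≠ 0 := by rintro rfl; simp at hfg; exact hq0 hfg
    have hg0 : g ≠ 0 := by rintro rfl; simp at hfg; exact hq0 hfg
    have hdeg : f.natDegree + g.natDegree = 2 := by
      rw [← natDegree_mul hf0 hg0, ← hfg, quad_natDegree]
    -- neither factor can have degree 0
    have hfd : f.natDegree ≠ 0 := by
      intro h0
      obtain ⟨p, rfl⟩ := natDegree_eq_zero.mp h0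
      have h2 : p * g.coeff 2 = 1 := by
        have := congrArg (fun q => coeff q 2) hfg
        simpa [coeff_X_pow, coeff_C] using this.symm
      exact hf (isUnit_C.mpr (IsUnit.of_mul_eq_one _ h2))
    have hgd : g.natDegree ≠ 0 := by
      intro h0
      obtain ⟨p, rfl⟩ := natDegree_eq_zero.mp h0
      have h2 : f.coeff 2 * p = 1 := by
        have := congrArg (fun q => coeff q 2) hfg
        simpa [coeff_X_pow, coeff_C] using this.symm
      exact hg (isUnit_C.mpr (IsUnit.of_mul_eq_one _ (mul_comm _ p ▸ h2)))
    have hf1 : f.natDegree = 1 := by omega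
    have hg1 : g.natDegree = 1 := by omega
    have hfe := eq_X_add_C_of_natDegree_le_one (hf1.le)
    have hge := eq_X_add_C_of_natDegree_le_one (hg1.le)
    set a1 := f.coeff 1 with ha1
    set a0 := f.coeff 0 with ha0
    set b1 := g.coeff 1 with hb1
    set b0 := g.coeff 0 with hb0
    rw [hfe, hge] at hfg
    have hprod : (C a1 * X + C a0) * (C b1 * X + C b0)
        = C (a1 * b1) * X ^ 2 + C (a1 * b0 + a0 * b1) * X + C (a0 * b0) := by simp only [C_mul, C_add]; ring
    rw [hprod] at hfg
    have e0 : a0 * b0 = -c := by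
      have := congrArg (fun q => coeff q 0) hfg
      simp only [coeff_sub, coeff_add, coeff_C_mul, coeff_X_pow, coeff_C, coeff_X] at this
      norm_num at this
      linear_combination -this
    have e1 : a1 * b0 + a0 * b1 = 0 := by
      have := congrArg (fun q => coeff q 1) hfg
      simp only [coeff_sub, coeff_add, coeff_C_mul, coeff_X_pow, coeff_C, coeff_X] at this
      norm_num at this
      linear_combination -this
    have e2 : a1 * b1 = 1 := by
      have := congrArg (fun q => coeff q 2) hfg
      simp only [coeff_sub, coeff_add, coeff_C_mul, coeff_X_pow, coeff_C, coeff_X] at this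
      norm_num at this
      linear_combination -this
    have hsq : (a0 * b1) ^ 2 = c := by
      linear_combination a0 * b1 * e1 - a1 * b1 * e0 + c * e2
    have hp0 : a0 * b1 ≠ 0 := by
      intro h
      rw [h] at hsq
      exact c_ne_zero (by simpa using hsq.symm)
    have h3 : 2 * (a0 * b1).natDegree = 3 := by
      rw [← natDegree_pow, hsq]; exact c_natDegree
    omega

end AuxPolynomial

section AuxEquiv
open MvPolynomial

variable {k : Type*} [Field k]

noncomputable def myEquiv (k : Type*) [Field k] :
    MvPolynomial (Fin 2) k ≃ₐ[k] Polynomial (Polynomial k) :=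
  (renameEquiv k (Equiv.swap 0 1)).trans ((finSuccEquiv k 1).trans
    (Polynomial.mapAlgEquiv ((renameEquiv k (Equiv.equivPUnit.{1,1} (Fin 1))).trans
      (pUnitAlgEquiv k))))

lemma myEquiv_X0 : myEquiv k (X 0) = Polynomial.C Polynomial.X := by
  rw [myEquiv]
  simp only [AlgEquiv.trans_apply, renameEquiv_apply, rename_X,
    show Equiv.swap (0 : Fin 2) 1 0 = 1 by decide]
  rw [show (X 1 : MvPolynomial (Fin 2) k) = X (Fin.succ 0) by norm_num,
    finSuccEquiv_X_succ]
  simp [Polynomial.mapAlgEquiv, Polynomial.mapAlgHom, AlgEquiv.ofAlgHom,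
    Polynomial.map_C, pUnitAlgEquiv]

lemma myEquiv_X1 : myEquiv k (X 1) = Polynomial.X := by
  rw [myEquiv]
  simp only [AlgEquiv.trans_apply, renameEquiv_apply, rename_X,
    show Equiv.swap (0 : Fin 2) 1 1 = 0 by decide, finSuccEquiv_X_zero]
  simp [Polynomial.mapAlgEquiv, Polynomial.mapAlgHom, AlgEquiv.ofAlgHom]

lemma a_prime : Prime ((X 0)^2 + (X 0)^3 - (X 1)^2 : MvPolynomial (Fin 2) k) := by
  rw [← MulEquiv.prime_iff (myEquiv k).toMulEquiv]
  have h : (myEquiv k).toMulEquiv ((X 0)^2 + (X 0)^3 - (X 1)^2 : MvPolynomial (Fin 2) k)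
      = -(Polynomial.X ^ 2 - Polynomial.C (Polynomial.X ^ 2 + Polynomial.X ^ 3 : Polynomial k)) := by
    show (myEquiv k) _ = _
    rw [map_sub, map_add, map_pow, map_pow, map_pow, myEquiv_X0, myEquiv_X1]
    rw [Polynomial.C_add, Polynomial.C_pow, Polynomial.C_pow]
    ring
  rw [h]
  exact (UniqueFactorizationMonoid.irreducible_iff_prime.mp quad_irreducible).neg

end AuxEquiv

open MvPolynomial

set_option maxHeartbeats 1000000 in
set_option synthInstance.maxHeartbeats 200000 in
/-- Let `k` be a field of characteristic 0 and `R = k[x,y]_{(x,y)}`. Then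
`R/(x² + x³ − y²)` is an integral domain, but for every `N ≥ 1` there exists
`δ ∈ (x,y)^N · R` such that `R/(x² + x³ − y² + δ)` is not an integral domain. -/
theorem domain_not_stable_under_perturbation (k : Type*) [Field k] [CharZero k]
    (P : Ideal (MvPolynomial (Fin 2) k)) [P.IsPrime]
    (hP : P = Ideal.span {X 0, X 1}) :
    IsDomain (Localization.AtPrime P ⧸
      Ideal.span {algebraMap (MvPolynomial (Fin 2) k) (Localization.AtPrime P)
        ((X 0) ^ 2 + (X 0) ^ 3 - (X 1) ^ 2)}) ∧
    ∀ N : ℕ, 1 ≤ N →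
      ∃ δ ∈ (Ideal.map (algebraMap (MvPolynomial (Fin 2) k) (Localization.AtPrime P)) P) ^ N,
        ¬ IsDomain (Localization.AtPrime P ⧸
          Ideal.span {algebraMap (MvPolynomial (Fin 2) k) (Localization.AtPrime P)
            ((X 0) ^ 2 + (X 0) ^ 3 - (X 1) ^ 2) + δ}) := by
  set R := Localization.AtPrime P with hR
  set φ := algebraMap (MvPolynomial (Fin 2) k) R with hφ
  set a : MvPolynomial (Fin 2) k := (X 0) ^ 2 + (X 0) ^ 3 - (X 1) ^ 2 with ha
  have hX0P : (X 0 : MvPolynomial (Fin 2) k) ∈ P := by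
    rw [hP]; exact Ideal.subset_span (by simp)
  have hX1P : (X 1 : MvPolynomial (Fin 2) k) ∈ P := by
    rw [hP]; exact Ideal.subset_span (by simp)
  have haP : a ∈ P := by
    exact sub_mem (add_mem (Ideal.pow_mem_of_mem P hX0P 2 (by norm_num))
      (Ideal.pow_mem_of_mem P hX0P 3 (by norm_num)))
      (Ideal.pow_mem_of_mem P hX1P 2 (by norm_num))
  have hpa : Prime a := a_prime
  have hinj : Function.Injective φ :=
    IsLocalization.injective R P.primeCompl_le_nonZeroDivisors
  constructor
  · -- first part
    have hspan : (Ideal.span {a} : Ideal (MvPolynomial (Fin 2) k)).IsPrime :=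
      (Ideal.span_singleton_prime hpa.ne_zero).mpr hpa
    have hdisj : Disjoint (P.primeCompl : Set (MvPolynomial (Fin 2) k))
        ((Ideal.span {a} : Ideal (MvPolynomial (Fin 2) k)) : Set (MvPolynomial (Fin 2) k)) := by
      rw [Set.disjoint_right]
      intro x hx
      have : x ∈ P := Ideal.span_le.mpr (by simpa using haP) hx
      simpa [Ideal.primeCompl] using this
    have hmapped : ((Ideal.span {a}).map φ).IsPrime :=
      IsLocalization.isPrime_of_isPrime_disjoint P.primeCompl R _ hspan hdisj
    have heq : Ideal.span {φ a} = (Ideal.span {a}).map φ := by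
      rw [Ideal.map_span, Set.image_singleton]
    haveI : (Ideal.span {φ a}).IsPrime := heq ▸ hmapped
    exact Ideal.Quotient.isDomain _
  · intro N _
    obtain ⟨s, hs0, t, ht⟩ := sqrt_trunc k N
    set ψ : Polynomial k →ₐ[k] MvPolynomial (Fin 2) k := Polynomial.aeval (X 0 : MvPolynomial (Fin 2) k) with hψ
    set S : MvPolynomial (Fin 2) k := ψ s with hS
    set T : MvPolynomial (Fin 2) k := ψ t with hT
    have hSt : S ^ 2 - (1 + X 0) = (X 0) ^ (N + 1) * T := by
      have := congrArg ψ ht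
      simpa [hψ, map_sub, map_add, map_mul, map_pow, map_one, Polynomial.aeval_X] using this
    set δ₀ : MvPolynomial (Fin 2) k := (X 0) ^ 2 * (S ^ 2 - 1 - X 0) with hδ₀
    have hδform : δ₀ = (X 0) ^ N * ((X 0) ^ 3 * T) := by
      rw [hδ₀]; linear_combination (X 0 : MvPolynomial (Fin 2) k) ^ 2 * hSt
    have hδmem : δ₀ ∈ P ^ N := by
      rw [hδform]; exact Ideal.mul_mem_right _ _ (Ideal.pow_mem_pow hX0P N)
    refine ⟨φ δ₀, ?_, ?_⟩
    · rw [← Ideal.map_pow]; exact Ideal.mem_map_of_mem φ hδmem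
    · set u : MvPolynomial (Fin 2) k := X 0 * S - X 1 with hu
      set v : MvPolynomial (Fin 2) k := X 0 * S + X 1 with hv
      have hfac : a + δ₀ = u * v := by rw [ha, hδ₀, hu, hv]; ring
      have hu_mem : u ∈ P := sub_mem (Ideal.mul_mem_right _ _ hX0P) hX1P
      have hv_mem : v ∈ P := add_mem (Ideal.mul_mem_right _ _ hX0P) hX1P
      have hu0 : u ≠ 0 := by
        intro h
        have := congrArg (MvPolynomial.eval fun i : Fin 2 => if i = 1 then (1:k) else 0) h
        simp [hu] at this
      have hv0 : v ≠ 0 := by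
        intro h
        have := congrArg (MvPolynomial.eval fun i : Fin 2 => if i = 1 then (1:k) else 0) h
        simp [hv] at this
      have hU0 : φ u ≠ 0 := fun h => hu0 (hinj (by rw [h, map_zero]))
      have hV0 : φ v ≠ 0 := fun h => hv0 (hinj (by rw [h, map_zero]))
      have hUnotunit : ¬ IsUnit (φ u) := fun h =>
        (IsLocalization.AtPrime.isUnit_to_map_iff R P u).mp h hu_mem
      have hVnotunit : ¬ IsUnit (φ v) := fun h =>
        (IsLocalization.AtPrime.isUnit_to_map_iff R P v).mp h hv_mem
      intro hD
      haveI := hD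
      have hgen : φ a + φ δ₀ = φ u * φ v := by rw [← map_mul, ← map_add, hfac]
      set I : Ideal R := Ideal.span {φ a + φ δ₀} with hI
      have hmkUV : Ideal.Quotient.mk I (φ u * φ v) = 0 :=
        Ideal.Quotient.eq_zero_iff_mem.mpr
          (by rw [← hgen]; exact Ideal.mem_span_singleton_self _)
      have hmkU : Ideal.Quotient.mk I (φ u) ≠ 0 := by
        intro h
        rw [Ideal.Quotient.eq_zero_iff_mem, hI, hgen, Ideal.mem_span_singleton] at h
        obtain ⟨r, hr⟩ := h
        have hz : φ u * (1 - φ v * r) = 0 := by linear_combination hr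
        rcases mul_eq_zero.mp hz with h1 | h2
        · exact hU0 h1
        · exact hVnotunit (IsUnit.of_mul_eq_one r (by linear_combination -h2))
      have hmkV : Ideal.Quotient.mk I (φ v) ≠ 0 := by
        intro h
        rw [Ideal.Quotient.eq_zero_iff_mem, hI, hgen, Ideal.mem_span_singleton] at h
        obtain ⟨r, hr⟩ := h
        have hz : φ v * (1 - φ u * r) = 0 := by linear_combination hr
        rcases mul_eq_zero.mp hz with h1 | h2
        · exact hV0 h1
        · exact hUnotunit (IsUnit.of_mul_eq_one r (by linear_combination -h2))
      have hgoal : Ideal.Quotient.mk I (φ u) * Ideal.Quotient.mk I (φ v) = 0 := by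
        rw [← map_mul]; exact hmkUV
      exact mul_ne_zero hmkU hmkV hgoal
end
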